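/- Let a > 0 and define p₂(x) = x²/(2a) + x/2 + a/16. Then the supremum of |max(x, 0) - p₂(x)| over x ∈ [-a, a] equals a/16; that is, |max(x, 0) - (x²/(2a) + x/2 + a/16)| ≤ a/16 for all x ∈ [-a, a], and this bound a/16 is attained (in particular at x = -a, x = -a/2, x = 0, x = a/2, and x = a, with alternating signs of the error). -/

import Mathlib

/-- For `a > 0` and `p₂(x) = x²/(2a) + x/2 + a/16`, the approximation error
`|max x 0 - p₂(x)|` is at most `a/16` on `[-a, a]`, and the bound is attained at
`-a`, `-a/2`, `0`, `a/2`, `a` with alternating signs of the error. -/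
theorem relu_minimax_quadratic_error (a : ℝ) (ha : 0 < a) :
    (∀ x ∈ Set.Icc (-a) a,
        |max x 0 - (x ^ 2 / (2 * a) + x / 2 + a / 16)| ≤ a / 16) ∧
      max (-a) 0 - ((-a) ^ 2 / (2 * a) + (-a) / 2 + a / 16) = -(a / 16) ∧
      max (-(a / 2)) 0 - ((-(a / 2)) ^ 2 / (2 * a) + (-(a / 2)) / 2 + a / 16) = a / 16 ∧
      max (0 : ℝ) 0 - ((0 : ℝ) ^ 2 / (2 * a) + (0 : ℝ) / 2 + a / 16) = -(a / 16) ∧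
      max (a / 2) 0 - ((a / 2) ^ 2 / (2 * a) + (a / 2) / 2 + a / 16) = a / 16 ∧
      max a 0 - (a ^ 2 / (2 * a) + a / 2 + a / 16) = -(a / 16) := by
  have ha' : a ≠ 0 := ne_of_gt ha
  refine ⟨?_, ?_, ?_, ?_, ?_, ?_⟩
  · rintro x ⟨hx1, hx2⟩
    rw [abs_le]
    have ht : x ^ 2 / (2 * a) * (2 * a) = x ^ 2 := by field_simp
    rcases le_or_gt x 0 with hx | hx
    · rw [max_eq_right hx]
      have h2 : -x / 2 - a / 8 ≤ x ^ 2 / (2 * a) := by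
        rw [le_div_iff₀ (by positivity)]; nlinarith [sq_nonneg (x + a/2)]
      constructor <;> [nlinarith [sq_nonneg (x + a/2)]; linarith]
    · rw [max_eq_left hx.le]
      constructor <;> [nlinarith [sq_nonneg x]; nlinarith [sq_nonneg (x - a/2)]]
  · rw [max_eq_right (by linarith)]; field_simp; ring
  · rw [max_eq_right (by linarith)]; field_simp; ring
  · rw [max_self]; field_simp; ring
  · rw [max_eq_left (by linarith)]; field_simp; ring
  · rw [max_eq_left (by linarith)]; field_simp; ring
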